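/- Let (G,≡,−1) be a special group and set M(G)=G∪{0} with 0 a new element. Define: a·b=0 if a=0 or b=0 and the group product otherwise; −a=(−1)·a; and a+b={b} if a=0, {a} if b=0, M(G) if a=−b with a≠0, and D_G(a,b) otherwise, where D_G(a,b)={c∈G : ∃d∈G, ⟨c,d⟩≡⟨a,b⟩}. Then (M(G),+,·,−,0,1) is a multifield. -/
import Mathlib


universe u v w

/-- The data of a multiring: a multivalued addition, a (single-valued) multiplication,
a negation map and constants `0`, `1`. -/
structure MultiringData (R : Type u) where
  add : R → R → Set R
  mul : R → R → R
  neg : R → R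
  zero : R
  one : R

/-- `(R,+,·,−,0,1)` is a multiring: `(R,+,−,0)` is a commutative multigroup,
`(R,·,1)` is a commutative monoid, `a·0 = 0`, and `c ∈ a+b → cd ∈ ad+bd`. -/
structure IsMultiring {R : Type u} (A : MultiringData R) : Prop where
  add_nonempty : ∀ a b, (A.add a b).Nonempty
  add_comm' : ∀ a b, A.add a b = A.add b a
  add_rev : ∀ {a b d}, d ∈ A.add a b → a ∈ A.add d (A.neg b) ∧ b ∈ A.add (A.neg a) d
  zero_add' : ∀ {x y}, y ∈ A.add A.zero x ↔ x = y
  add_assoc' : ∀ a b c, (⋃ t ∈ A.add a b, A.add t c) = ⋃ s ∈ A.add b c, A.add a s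
  mul_comm' : ∀ a b, A.mul a b = A.mul b a
  mul_assoc' : ∀ a b c, A.mul (A.mul a b) c = A.mul a (A.mul b c)
  one_mul' : ∀ a, A.mul A.one a = a
  mul_zero' : ∀ a, A.mul a A.zero = A.zero
  distrib : ∀ (d : R) {a b c : R}, c ∈ A.add a b → A.mul c d ∈ A.add (A.mul a d) (A.mul b d)

/-- A multifield is a multiring in which every nonzero element has a multiplicative
inverse (and `1 ≠ 0`). -/
structure IsMultifield {R : Type u} (A : MultiringData R) extends IsMultiring A : Prop where
  one_ne_zero' : A.one ≠ A.zero
  inv : ∀ a, a ≠ A.zero → ∃ b, A.mul a b = A.one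

/-- A real reduced multifield: a multifield with `a³ = a` and `a ∈ 1+1 → a = 1`. -/
def IsRealReducedMultifield {R : Type u} (A : MultiringData R) : Prop :=
  IsMultifield A ∧ (∀ a, A.mul (A.mul a a) a = a) ∧ ∀ a, a ∈ A.add A.one A.one → a = A.one

/-- A real reduced multiring: `1 ≠ 0`, `a³ = a`, `c ∈ a + ab² → c = a`, and
`c, d ∈ a² + b² → c = d`. -/
def IsRealReducedMultiring {R : Type u} (A : MultiringData R) : Prop :=
  IsMultiring A ∧ A.one ≠ A.zero ∧ (∀ a, A.mul (A.mul a a) a = a) ∧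
    (∀ a b c, c ∈ A.add a (A.mul a (A.mul b b)) → c = a) ∧
    (∀ a b c d, c ∈ A.add (A.mul a a) (A.mul b b) → d ∈ A.add (A.mul a a) (A.mul b b) → c = d)

/-- Morphisms of multirings. -/
structure IsMultiringHom {R : Type u} {S : Type v} (A : MultiringData R) (B : MultiringData S)
    (f : R → S) : Prop where
  map_add : ∀ {a b c}, c ∈ A.add a b → f c ∈ B.add (f a) (f b)
  map_neg : ∀ a, f (A.neg a) = B.neg (f a)
  map_zero : f A.zero = B.zero
  map_mul : ∀ a b, f (A.mul a b) = B.mul (f a) (f b)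
  map_one : f A.one = B.one

/-- Isomorphisms of multirings: bijective morphisms whose inverse is again a morphism. -/
def IsMultiringIso {R : Type u} {S : Type v} (A : MultiringData R) (B : MultiringData S)
    (f : R → S) : Prop :=
  IsMultiringHom A B f ∧ Function.Bijective f ∧
    ∀ a b c, f c ∈ B.add (f a) (f b) → c ∈ A.add a b
/-- The data of a special group: a group operation on `G`, the unit, a distinguished
element `−1`, and the special relation `≡` on `G²`. -/
structure SGData (G : Type u) where
  mul : G → G → G
  one : G
  negOne : G
  equiv : G × G → G × G → Prop

/-- `−a = (−1)·a` in a special group. -/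
def SGData.neg {G : Type u} (S : SGData G) (a : G) : G := S.mul S.negOne a

/-- The extension of `≡` to a binary relation on `G³`. -/
def SGData.equiv3 {G : Type u} (S : SGData G) (u v : G × G × G) : Prop :=
  ∃ x y z, S.equiv (u.1, x) (v.1, y) ∧ S.equiv (u.2.1, u.2.2) (x, z) ∧
    S.equiv (v.2.1, v.2.2) (y, z)

/-- `(G, ≡, −1)` is a special group: `G` is a group of exponent 2 and `≡` satisfies
axioms SG0–SG6. -/
structure IsSpecialGroup {G : Type u} (S : SGData G) : Prop where
  mul_comm' : ∀ a b, S.mul a b = S.mul b a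
  mul_assoc' : ∀ a b c, S.mul (S.mul a b) c = S.mul a (S.mul b c)
  one_mul' : ∀ a, S.mul S.one a = a
  exp2 : ∀ a, S.mul a a = S.one
  sg0 : Equivalence S.equiv
  sg1 : ∀ a b, S.equiv (a, b) (b, a)
  sg2 : ∀ a, S.equiv (a, S.neg a) (S.one, S.negOne)
  sg3 : ∀ a b c d, S.equiv (a, b) (c, d) → S.mul a b = S.mul c d
  sg4 : ∀ a b c d, S.equiv (a, b) (c, d) → S.equiv (a, S.neg c) (S.neg b, d)
  sg5 : ∀ a b c d g, S.equiv (a, b) (c, d) →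
    S.equiv (S.mul g a, S.mul g b) (S.mul g c, S.mul g d)
  sg6 : ∀ u v w, S.equiv3 u v → S.equiv3 v w → S.equiv3 u w

/-- `c ∈ D_G(a,b)`: `c` is represented by the form `⟨a,b⟩`. -/
def SGData.rep {G : Type u} (S : SGData G) (a b c : G) : Prop := ∃ d, S.equiv (c, d) (a, b)

/-- The multiring data `M(G) = G ∪ {0}` associated to a special group: the group product
extended by `0`, `−a = (−1)·a`, and `a + b = {b}` if `a = 0`, `{a}` if `b = 0`, `M(G)` if
`a = −b ≠ 0`, and `D_G(a,b)` otherwise. -/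
def MofSG {G : Type u} (S : SGData G) : MultiringData (Option G) where
  add a b :=
    {c | (a = none ∧ c = b) ∨ (b = none ∧ c = a) ∨
      (∃ g : G, a = some g ∧ b = some (S.neg g)) ∨
      (∃ g k m : G, a = some g ∧ b = some k ∧ k ≠ S.neg g ∧ c = some m ∧ S.rep g k m)}
  mul a b :=
    match a, b with
    | some g, some k => some (S.mul g k)
    | _, _ => none
  neg a := a.map S.neg
  zero := none
  one := some S.one

namespace IsSpecialGroup

variable {G : Type u} {S : SGData G} (h : IsSpecialGroup S)

include h
set_option linter.unusedSectionVars false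

lemma mul_one' (a : G) : S.mul a S.one = a := by
  rw [h.mul_comm']; exact h.one_mul' a

lemma neg_neg' (a : G) : S.neg (S.neg a) = a := by
  show S.mul _ (S.mul _ _) = a
  rw [← h.mul_assoc', h.exp2, h.one_mul']

lemma neg_mul' (a b : G) : S.mul (S.neg a) b = S.neg (S.mul a b) :=
  h.mul_assoc' _ _ _

lemma rep_refl (a b : G) : S.rep a b a :=
  ⟨b, h.sg0.refl _⟩

lemma rep_symm {a b c : G} (hc : S.rep a b c) : S.rep b a c := by
  obtain ⟨d, hd⟩ := hc
  exact ⟨d, h.sg0.trans hd (h.sg1 a b)⟩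

lemma rep_scale {a b c : G} (g : G) (hc : S.rep a b c) :
    S.rep (S.mul g a) (S.mul g b) (S.mul g c) := by
  obtain ⟨d, hd⟩ := hc
  exact ⟨S.mul g d, h.sg5 _ _ _ _ g hd⟩

lemma rep_rot {g k m : G} (hm : S.rep g k m) : S.rep m (S.neg k) g := by
  obtain ⟨e, he⟩ := hm
  have h1 : S.equiv (m, e) (k, g) := h.sg0.trans he (h.sg1 g k)
  have h2 : S.equiv (m, S.neg k) (S.neg e, g) := h.sg4 _ _ _ _ h1
  exact ⟨S.neg e, h.sg0.trans (h.sg1 g (S.neg e)) (h.sg0.symm h2)⟩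

lemma rep_neg (g m : G) : S.rep g (S.neg g) m :=
  ⟨S.neg m, h.sg0.trans (h.sg2 m) (h.sg0.symm (h.sg2 g))⟩

lemma rep_assoc {g k l m n : G} (h1 : S.rep g k m) (h2 : S.rep m l n) :
    ∃ p, S.rep k l p ∧ S.rep g p n := by
  obtain ⟨d, hd⟩ := h1
  obtain ⟨e, he⟩ := h2
  have hv : S.equiv3 (m, l, d) (g, l, k) := ⟨d, k, l, hd, h.sg1 l d, h.sg1 l k⟩
  have hu : S.equiv3 (n, e, d) (m, l, d) := ⟨e, l, d, he, h.sg0.refl _, h.sg0.refl _⟩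
  obtain ⟨x, y, z, hxy, -, hyz⟩ := h.sg6 _ _ _ hu hv
  exact ⟨y, h.rep_symm ⟨z, h.sg0.symm hyz⟩, ⟨x, hxy⟩⟩

lemma mem_add_none_left {b x : Option G} : x ∈ (MofSG S).add none b ↔ x = b := by
  constructor
  · rintro (⟨-, rfl⟩ | ⟨rfl, rfl⟩ | ⟨g, hg, -⟩ | ⟨g, k, m, hg, -⟩) <;> simp_all
  · rintro rfl; exact Or.inl ⟨rfl, rfl⟩

lemma mem_add_none_right {a x : Option G} : x ∈ (MofSG S).add a none ↔ x = a := by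
  constructor
  · rintro (⟨rfl, rfl⟩ | ⟨-, rfl⟩ | ⟨g, hg, hk⟩ | ⟨g, k, m, hg, hk, -⟩) <;> simp_all
  · rintro rfl; exact Or.inr (Or.inl ⟨rfl, rfl⟩)

lemma some_mem_add {g k m : G} :
    some m ∈ (MofSG S).add (some g) (some k) ↔ S.rep g k m := by
  constructor
  · rintro (⟨h1, -⟩ | ⟨h1, -⟩ | ⟨g', hg', hk'⟩ | ⟨g', k', m', hg', hk', hne, hm', hr⟩)
    · cases h1
    · cases h1
    · obtain rfl : g = g' := Option.some.inj hg'
      obtain rfl : k = S.neg g := Option.some.inj hk'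
      exact h.rep_neg g m
    · obtain rfl : g = g' := Option.some.inj hg'
      obtain rfl : k = k' := Option.some.inj hk'
      obtain rfl : m = m' := Option.some.inj hm'
      exact hr
  · intro hr
    by_cases hk : k = S.neg g
    · exact Or.inr (Or.inr (Or.inl ⟨g, rfl, by rw [hk]⟩))
    · exact Or.inr (Or.inr (Or.inr ⟨g, k, m, rfl, rfl, hk, rfl, hr⟩))

lemma none_mem_add {g k : G} :
    none ∈ (MofSG S).add (some g) (some k) ↔ k = S.neg g := by
  constructor
  · rintro (⟨h1, -⟩ | ⟨h1, -⟩ | ⟨g', hg', hk'⟩ | ⟨g', k', m', hg', hk', hne, hm', hr⟩)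
    · cases h1
    · cases h1
    · obtain rfl : g = g' := Option.some.inj hg'
      injection hk'
    · cases hm'
  · intro hk
    exact Or.inr (Or.inr (Or.inl ⟨g, rfl, by rw [hk]⟩))

lemma add_comm'' (a b : Option G) : (MofSG S).add a b = (MofSG S).add b a := by
  ext x
  match a, b with
  | none, b => rw [h.mem_add_none_left, h.mem_add_none_right]
  | a, none => rw [h.mem_add_none_left, h.mem_add_none_right]
  | some g, some k =>
    match x with
    | none =>
      rw [h.none_mem_add, h.none_mem_add]
      constructor
      · rintro rfl; rw [h.neg_neg']
      · rintro rfl; rw [h.neg_neg']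
    | some m =>
      rw [h.some_mem_add, h.some_mem_add]
      exact ⟨h.rep_symm, h.rep_symm⟩

/-- One inclusion of associativity; the other follows by commutativity. -/
lemma add_subset_assoc (a b c : Option G) :
    (⋃ t ∈ (MofSG S).add a b, (MofSG S).add t c) ⊆
      ⋃ s ∈ (MofSG S).add b c, (MofSG S).add a s := by
  intro x hx
  simp only [Set.mem_iUnion, exists_prop] at hx ⊢
  obtain ⟨t, ht, hxt⟩ := hx
  match a, b, c with
  | none, b, c =>
    rw [h.mem_add_none_left] at ht
    subst ht
    exact ⟨x, hxt, h.mem_add_none_left.mpr rfl⟩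
  | some g, none, c =>
    rw [h.mem_add_none_right] at ht
    subst ht
    exact ⟨c, h.mem_add_none_left.mpr rfl, hxt⟩
  | some g, some k, none =>
    rw [h.mem_add_none_right] at hxt
    subst hxt
    exact ⟨some k, h.mem_add_none_right.mpr rfl, ht⟩
  | some g, some k, some l =>
    match t with
    | none =>
      rw [h.none_mem_add] at ht
      subst ht
      rw [h.mem_add_none_left] at hxt
      subst hxt
      refine ⟨some l, ?_, ?_⟩
      · exact h.some_mem_add.mpr ⟨S.neg g, h.sg1 l (S.neg g)⟩
      · exact h.some_mem_add.mpr ⟨g, h.sg1 l g⟩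
    | some m =>
      rw [h.some_mem_add] at ht
      match x with
      | none =>
        rw [h.none_mem_add] at hxt
        subst hxt
        refine ⟨some (S.neg g), ?_, h.none_mem_add.mpr rfl⟩
        rw [h.some_mem_add]
        -- need : S.rep k (S.neg m) (S.neg g)
        have h1 : S.rep (S.neg g) (S.neg k) (S.neg m) := h.rep_scale S.negOne ht
        have h2 := h.rep_rot h1
        rw [h.neg_neg'] at h2
        exact h.rep_symm h2
      | some n =>
        rw [h.some_mem_add] at hxt
        obtain ⟨p, hp1, hp2⟩ := h.rep_assoc ht hxt
        exact ⟨some p, h.some_mem_add.mpr hp1, h.some_mem_add.mpr hp2⟩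

end IsSpecialGroup

/-- For a special group `(G, ≡, −1)`, the structure `M(G) = G ∪ {0}` is a multifield. -/
theorem sg_to_multifield {G : Type u} (S : SGData G) (h : IsSpecialGroup S) :
    IsMultifield (MofSG S) := by
  constructor
  case one_ne_zero' => exact Option.some_ne_none _
  case inv =>
    intro a ha
    match a with
    | none => exact absurd rfl ha
    | some g => exact ⟨some g, by show some (S.mul g g) = some S.one; rw [h.exp2]⟩
  constructor
  case add_nonempty =>
    intro a b
    match a, b with
    | none, b => exact ⟨b, h.mem_add_none_left.mpr rfl⟩
    | a, none => exact ⟨a, h.mem_add_none_right.mpr rfl⟩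
    | some g, some k => exact ⟨some g, h.some_mem_add.mpr (h.rep_refl g k)⟩
  case add_comm' => exact h.add_comm''
  case zero_add' =>
    intro x y
    rw [show (MofSG S).zero = none from rfl, h.mem_add_none_left, eq_comm]
  case add_rev =>
    intro a b d hd
    match a, b with
    | none, b =>
      rw [h.mem_add_none_left] at hd
      subst hd
      constructor
      · match d with
        | none => exact h.mem_add_none_left.mpr rfl
        | some k =>
          show none ∈ (MofSG S).add (some k) (some (S.neg k))
          exact h.none_mem_add.mpr rfl
      · exact h.mem_add_none_left.mpr rfl
    | some g, none =>
      rw [h.mem_add_none_right] at hd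
      subst hd
      refine ⟨h.mem_add_none_right.mpr rfl, ?_⟩
      show none ∈ (MofSG S).add (some (S.neg g)) (some g)
      rw [h.none_mem_add, h.neg_neg']
    | some g, some k =>
      match d with
      | none =>
        rw [h.none_mem_add] at hd
        subst hd
        constructor
        · rw [h.mem_add_none_left]
          show some g = some (S.neg (S.neg g))
          rw [h.neg_neg']
        · exact h.mem_add_none_right.mpr rfl
      | some m =>
        rw [h.some_mem_add] at hd
        constructor
        · show some g ∈ (MofSG S).add (some m) (some (S.neg k))
          exact h.some_mem_add.mpr (h.rep_rot hd)
        · show some k ∈ (MofSG S).add (some (S.neg g)) (some m)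
          exact h.some_mem_add.mpr (h.rep_symm (h.rep_rot (h.rep_symm hd)))
  case add_assoc' =>
    intro a b c
    apply Set.Subset.antisymm (h.add_subset_assoc a b c)
    intro x hx
    simp only [Set.mem_iUnion, exists_prop] at hx ⊢
    obtain ⟨s, hs, hxs⟩ := hx
    rw [h.add_comm''] at hs hxs
    have : x ∈ ⋃ u ∈ (MofSG S).add b a, (MofSG S).add c u := by
      apply h.add_subset_assoc c b a
      simp only [Set.mem_iUnion, exists_prop]
      exact ⟨s, hs, hxs⟩
    simp only [Set.mem_iUnion, exists_prop] at this
    obtain ⟨u, hu, hxu⟩ := this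
    rw [h.add_comm''] at hu hxu
    exact ⟨u, hu, hxu⟩
  case mul_comm' =>
    intro a b
    match a, b with
    | none, none => rfl
    | none, some k => rfl
    | some g, none => rfl
    | some g, some k => show some (S.mul g k) = some (S.mul k g); rw [h.mul_comm']
  case mul_assoc' =>
    intro a b c
    match a, b, c with
    | none, _, _ => rfl
    | some g, none, _ => rfl
    | some g, some k, none => rfl
    | some g, some k, some l =>
      show some (S.mul (S.mul g k) l) = some (S.mul g (S.mul k l))
      rw [h.mul_assoc']
  case one_mul' =>
    intro a
    match a with
    | none => rfl
    | some g => show some (S.mul S.one g) = some g; rw [h.one_mul']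
  case mul_zero' =>
    intro a
    match a with
    | none => rfl
    | some g => rfl
  case distrib =>
    intro d a b c hc
    match d with
    | none =>
      have : ∀ x : Option G, (MofSG S).mul x none = none := fun x => by
        match x with | none => rfl | some g => rfl
      rw [this, this, this]
      exact Or.inl ⟨rfl, rfl⟩
    | some t =>
      match a, b with
      | none, b =>
        rw [h.mem_add_none_left] at hc
        subst hc
        exact h.mem_add_none_left.mpr rfl
      | some g, none =>
        rw [h.mem_add_none_right] at hc
        subst hc
        exact h.mem_add_none_right.mpr rfl
      | some g, some k =>
        match c with
        | none =>
          rw [h.none_mem_add] at hc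
          subst hc
          show none ∈ (MofSG S).add (some (S.mul g t)) (some (S.mul (S.neg g) t))
          rw [h.none_mem_add, h.neg_mul']
        | some m =>
          rw [h.some_mem_add] at hc
          show some (S.mul m t) ∈
            (MofSG S).add (some (S.mul g t)) (some (S.mul k t))
          rw [h.some_mem_add]
          have := h.rep_scale t hc
          rwa [h.mul_comm' t g, h.mul_comm' t k, h.mul_comm' t m] at this
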